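/- The Poincaré series of the ring of quasi-invariants for A₂(m) equals (1 + t⁴ + t⁵ + t^{2m+2} + t^{2m+3} + t^{2m+7}) / ((1-t²)(1-t³)). -/

import Mathlib

open MvPolynomial

/-- Evaluation at the point `(x, y) ∈ ℂ²`, as a linear map on polynomials. -/
noncomputable def evalAt (x y : ℂ) : MvPolynomial (Fin 2) ℂ →ₗ[ℂ] ℂ :=
  (MvPolynomial.aeval ![x, y]).toLinearMap

/-- The directional derivative `a·∂_x + b·∂_y` on polynomials in two variables. -/
noncomputable def dirD (a b : ℂ) : Module.End ℂ (MvPolynomial (Fin 2) ℂ) :=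
  a • (MvPolynomial.pderiv 0).toLinearMap + b • (MvPolynomial.pderiv 1).toLinearMap

/-- The submodule of quasi-invariants of the configuration `A₂(m)` realized in `ℂ²`: the vector
`e₁` (line `x = 0`) carries multiplicity `m`, and the vectors `e₁ ± η·e₂` (lines `x ± ηy = 0`)
multiplicity `1`, where `η² = 2m+1`. A polynomial `q` is quasi-invariant if the odd normal
derivatives `∂_α^{2r-1} q`, `r = 1,...,m_α`, vanish on each line. -/
noncomputable def quasiA (m : ℕ) (η : ℂ) : Submodule ℂ (MvPolynomial (Fin 2) ℂ) :=
  (⨅ r ∈ Finset.Icc 1 m, ⨅ y : ℂ,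
    LinearMap.ker ((evalAt 0 y).comp ((dirD 1 0 ^ (2 * r - 1) : Module.End ℂ _) :
      MvPolynomial (Fin 2) ℂ →ₗ[ℂ] MvPolynomial (Fin 2) ℂ))) ⊓
  (⨅ t : ℂ, LinearMap.ker ((evalAt (-(η * t)) t).comp (dirD 1 η))) ⊓
  (⨅ t : ℂ, LinearMap.ker ((evalAt (η * t) t).comp (dirD 1 (-η))))

section QAproof
open Finset

namespace QA

noncomputable def ee (k l : ℕ) : Fin 2 →₀ ℕ := Finsupp.single 0 k + Finsupp.single 1 l

lemma ee_apply0 (k l : ℕ) : ee k l 0 = k := by simp [ee]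
lemma ee_apply1 (k l : ℕ) : ee k l 1 = l := by simp [ee]

lemma ee_degree (k l : ℕ) : (ee k l).degree = k + l := by
  rw [Finsupp.degree_eq_weight_one]
  simp [ee, map_add, Finsupp.weight_apply, Finsupp.sum_single_index]

lemma fin2_eq (d : Fin 2 →₀ ℕ) : d = ee (d 0) (d 1) := by
  ext i
  fin_cases i <;> simp [ee]

lemma ee_inj {k l k' l' : ℕ} (h : ee k l = ee k' l') : k = k' ∧ l = l' :=
  ⟨by rw [← ee_apply0 k l, h, ee_apply0], by rw [← ee_apply1 k l, h, ee_apply1]⟩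

lemma ee_sub0 (k l : ℕ) : ee k l - Finsupp.single 0 1 = ee (k-1) l := by
  ext i; fin_cases i <;> simp [ee]

lemma ee_sub1 (k l : ℕ) : ee k l - Finsupp.single 1 1 = ee k (l-1) := by
  ext i; fin_cases i <;> simp [ee]

lemma evalAt_monomial (x y : ℂ) (k l : ℕ) (a : ℂ) :
    evalAt x y (monomial (ee k l) a) = a * x ^ k * y ^ l := by
  simp [evalAt, aeval_monomial, ee, Finsupp.prod_add_index, Finsupp.prod_single_index, mul_assoc]

lemma pd0_monomial (k l : ℕ) (a : ℂ) :
    MvPolynomial.pderiv 0 (monomial (ee k l) a) = monomial (ee (k-1) l) (a * k) := by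
  rw [pderiv_monomial, ee_sub0, ee_apply0]

lemma pd1_monomial (k l : ℕ) (a : ℂ) :
    MvPolynomial.pderiv 1 (monomial (ee k l) a) = monomial (ee k (l-1)) (a * l) := by
  rw [pderiv_monomial, ee_sub1, ee_apply1]

lemma pd0_pow_monomial (j k l : ℕ) (a : ℂ) :
    ((MvPolynomial.pderiv (R := ℂ) (0 : Fin 2)).toLinearMap ^ j) (monomial (ee k l) a)
      = monomial (ee (k-j) l) (a * (Nat.descFactorial k j : ℂ)) := by
  induction j with
  | zero => simp
  | succ j ih =>
      rw [pow_succ', Module.End.mul_apply, ih]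
      show MvPolynomial.pderiv 0 _ = _
      rw [pd0_monomial]
      rw [Nat.descFactorial_succ]
      have : k - j - 1 = k - (j+1) := by omega
      rw [this]
      push_cast
      ring_nf

lemma dirD_one_zero : dirD 1 0 = (MvPolynomial.pderiv (R := ℂ) (0 : Fin 2)).toLinearMap := by
  rw [dirD, one_smul, zero_smul, add_zero]

lemma evalAt_pd0_pow (y : ℂ) (j n : ℕ) (a : ℕ → ℂ) :
    evalAt 0 y (((dirD 1 0) ^ j)
      (∑ k ∈ range (n+1), monomial (ee k (n-k)) (a k)))
      = if j ≤ n then a j * (Nat.factorial j) * y^(n-j) else 0 := by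
  rw [dirD_one_zero, map_sum, map_sum]
  have h1 : ∀ k ∈ range (n+1),
      evalAt 0 y (((MvPolynomial.pderiv (R := ℂ) (0 : Fin 2)).toLinearMap ^ j)
        (monomial (ee k (n-k)) (a k)))
      = if k = j then a j * (Nat.factorial j) * y^(n-j) else 0 := by
    intro k hk
    rw [pd0_pow_monomial, evalAt_monomial]
    rcases lt_trichotomy k j with h | h | h
    · rw [if_neg h.ne, Nat.descFactorial_eq_zero_iff_lt.2 h]
      simp
    · subst h
      rw [if_pos rfl, Nat.sub_self, pow_zero, Nat.descFactorial_self]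
      ring
    · rw [if_neg h.ne', zero_pow (by omega)]
      ring
  rw [Finset.sum_congr rfl h1, Finset.sum_ite_eq' (range (n+1))]
  simp [Nat.lt_succ_iff]

lemma mini1 (x t : ℂ) (n k : ℕ) (hk : k ≤ n) :
    (k:ℂ) * (x*t)^(k-1) * t^(n-k) = k * x^(k-1) * t^(n-1) := by
  rcases k with _ | k
  · simp
  · rw [Nat.succ_sub_one, mul_pow, mul_assoc ((k+1:ℕ):ℂ), mul_assoc, mul_assoc, ← pow_add]
    congr 3
    omega

lemma mini2 (x t : ℂ) (n k : ℕ) (hk : k ≤ n) :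
    ((n-k:ℕ):ℂ) * (x*t)^k * t^(n-k-1) = ((n-k:ℕ):ℂ) * x^k * t^(n-1) := by
  rcases eq_or_lt_of_le hk with h | h
  · subst h; simp
  · rw [mul_pow, mul_assoc ((n-k:ℕ):ℂ), mul_assoc, mul_assoc, ← pow_add]
    congr 3
    omega

lemma evalAt_dirD_sum (b x t : ℂ) (n : ℕ) (a : ℕ → ℂ) :
    evalAt (x*t) t (dirD 1 b (∑ k ∈ range (n+1), monomial (ee k (n-k)) (a k)))
    = t^(n-1) * ∑ k ∈ range (n+1), a k * ((k:ℂ) * x^(k-1) + b * ((n-k:ℕ):ℂ) * x^k) := by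
  rw [map_sum, map_sum, mul_sum]
  refine Finset.sum_congr rfl ?_
  intro k hk
  have hk' : k ≤ n := by simpa [Nat.lt_succ_iff] using hk
  rw [dirD, LinearMap.add_apply, LinearMap.smul_apply, LinearMap.smul_apply]
  show evalAt (x*t) t ((1:ℂ) • MvPolynomial.pderiv 0 _ + b • MvPolynomial.pderiv 1 _) = _
  rw [map_add, map_smul, map_smul, pd0_monomial, pd1_monomial, evalAt_monomial, evalAt_monomial]
  have e1 := mini1 x t n k hk'
  have e2 := mini2 x t n k hk'
  rw [smul_eq_mul, smul_eq_mul, one_mul]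
  calc a k * ↑k * (x*t)^(k-1) * t^(n-k) + b * (a k * ((n-k:ℕ):ℂ) * (x*t)^k * t^(n-k-1))
      = a k * ((k:ℂ) * (x*t)^(k-1) * t^(n-k)) + a k * b * (((n-k:ℕ):ℂ) * (x*t)^k * t^(n-k-1)) := by ring
    _ = a k * ((k:ℂ) * x^(k-1) * t^(n-1)) + a k * b * (((n-k:ℕ):ℂ) * x^k * t^(n-1)) := by rw [e1, e2]
    _ = t^(n-1) * (a k * ((k:ℂ) * x^(k-1) + b * ((n-k:ℕ):ℂ) * x^k)) := by ring

noncomputable def Gp (η : ℂ) (n k : ℕ) : ℂ :=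
  (k:ℂ) * η^(k-1) + (-η) * ((n-k:ℕ):ℂ) * η^k

noncomputable def Gm (η : ℂ) (n k : ℕ) : ℂ :=
  (k:ℂ) * (-η)^(k-1) + η * ((n-k:ℕ):ℂ) * (-η)^k

lemma Gm_eq (η : ℂ) (n k : ℕ) :
    Gm η n k = if k % 2 = 0 then -Gp η n k else Gp η n k := by
  rcases k with _ | j
  · simp [Gm, Gp]
  · have h1 : (-η)^j = (-1)^j * η^j := by rw [neg_pow]
    have h2 : (-η)^(j+1) = (-1)^(j+1) * η^(j+1) := by rw [neg_pow]
    rcases Nat.even_or_odd j with he | ho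
    · have hm : (j+1) % 2 = 1 := by
        obtain ⟨c, rfl⟩ := he; omega
      rw [if_neg (by omega), Gm, Gp, Nat.succ_sub_one, h1, h2, he.neg_one_pow,
        (by obtain ⟨c, rfl⟩ := he; exact ⟨c, by ring⟩ : Odd (j+1)).neg_one_pow]
      ring
    · have hm : (j+1) % 2 = 0 := by
        obtain ⟨c, rfl⟩ := ho; omega
      rw [if_pos hm, Gm, Gp, Nat.succ_sub_one, h1, h2, ho.neg_one_pow,
        (by obtain ⟨c, rfl⟩ := ho; exact ⟨c+1, by ring⟩ : Even (j+1)).neg_one_pow]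
      ring

lemma mem_quasiA_sum_iff (m n : ℕ) (η : ℂ) (a : ℕ → ℂ) :
    (∑ k ∈ range (n+1), monomial (ee k (n-k)) (a k)) ∈ quasiA m η ↔
      (∀ r ∈ Finset.Icc 1 m, 2*r-1 ≤ n → a (2*r-1) = 0) ∧
      (∑ k ∈ (range (n+1)).filter (fun k => k % 2 = 0), a k * Gp η n k = 0) ∧
      (∑ k ∈ (range (n+1)).filter (fun k => ¬ (k % 2 = 0)), a k * Gp η n k = 0) := by
  set q := ∑ k ∈ range (n+1), monomial (ee k (n-k)) (a k) with hq
  have hmem : q ∈ quasiA m η ↔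
      (∀ r ∈ Finset.Icc 1 m, ∀ y : ℂ, evalAt 0 y (((dirD 1 0)^(2*r-1)) q) = 0) ∧
      (∀ t : ℂ, evalAt (-(η*t)) t (dirD 1 η q) = 0) ∧
      (∀ t : ℂ, evalAt (η*t) t (dirD 1 (-η) q) = 0) := by
    simp only [quasiA, Submodule.mem_inf, Submodule.mem_iInf, LinearMap.mem_ker,
      LinearMap.coe_comp, Function.comp_apply, and_assoc]
  rw [hmem]
  have hfac : ∀ r : ℕ, ((Nat.factorial (2*r-1) : ℂ)) ≠ 0 := by
    intro r
    exact_mod_cast Nat.cast_ne_zero.2 (Nat.factorial_ne_zero _)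
  have c1 : (∀ r ∈ Finset.Icc 1 m, ∀ y : ℂ, evalAt 0 y (((dirD 1 0)^(2*r-1)) q) = 0) ↔
      (∀ r ∈ Finset.Icc 1 m, 2*r-1 ≤ n → a (2*r-1) = 0) := by
    refine forall₂_congr fun r hr => ?_
    rw [hq]
    constructor
    · intro h hle
      have h2 := h 1
      rw [evalAt_pd0_pow, if_pos hle, one_pow, mul_one] at h2
      exact (mul_eq_zero.1 h2).resolve_right (hfac r)
    · intro h y
      rw [evalAt_pd0_pow]
      split_ifs with hle
      · rw [h hle]; ring
      · rfl
  have key2 : ∀ t : ℂ, evalAt (-(η*t)) t (dirD 1 η q) =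
      t^(n-1) * ∑ k ∈ range (n+1), a k * Gm η n k := by
    intro t
    have h := evalAt_dirD_sum η (-η) t n a
    rw [neg_mul] at h
    simpa only [Gm] using h
  have key3 : ∀ t : ℂ, evalAt (η*t) t (dirD 1 (-η) q) =
      t^(n-1) * ∑ k ∈ range (n+1), a k * Gp η n k := by
    intro t
    simpa only [Gp] using evalAt_dirD_sum (-η) η t n a
  have cgen : ∀ (S : ℂ), (∀ t : ℂ, t^(n-1) * S = 0) ↔ S = 0 := by
    intro S
    constructor
    · intro h
      have := h 1
      rwa [one_pow, one_mul] at this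
    · intro h t; rw [h, mul_zero]
  have c2 : (∀ t : ℂ, evalAt (-(η*t)) t (dirD 1 η q) = 0) ↔
      (∑ k ∈ range (n+1), a k * Gm η n k = 0) := by
    rw [← cgen (∑ k ∈ range (n+1), a k * Gm η n k)]
    exact forall_congr' fun t => by rw [key2]
  have c3 : (∀ t : ℂ, evalAt (η*t) t (dirD 1 (-η) q) = 0) ↔
      (∑ k ∈ range (n+1), a k * Gp η n k = 0) := by
    rw [← cgen (∑ k ∈ range (n+1), a k * Gp η n k)]
    exact forall_congr' fun t => by rw [key3]
  rw [c1, c2, c3]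
  have hsplitp : (∑ k ∈ range (n+1), a k * Gp η n k) =
      (∑ k ∈ (range (n+1)).filter (fun k => k % 2 = 0), a k * Gp η n k)
      + (∑ k ∈ (range (n+1)).filter (fun k => ¬ (k % 2 = 0)), a k * Gp η n k) :=
    (Finset.sum_filter_add_sum_filter_not _ _ _).symm
  have hsplitm : (∑ k ∈ range (n+1), a k * Gm η n k) =
      -(∑ k ∈ (range (n+1)).filter (fun k => k % 2 = 0), a k * Gp η n k)
      + (∑ k ∈ (range (n+1)).filter (fun k => ¬ (k % 2 = 0)), a k * Gp η n k) := by
    rw [← Finset.sum_filter_add_sum_filter_not (range (n+1)) (fun k => k % 2 = 0)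
      (fun k => a k * Gm η n k), ← Finset.sum_neg_distrib]
    congr 1
    · refine Finset.sum_congr rfl fun k hk => ?_
      rw [Gm_eq, if_pos (Finset.mem_filter.1 hk).2]
      ring
    · refine Finset.sum_congr rfl fun k hk => ?_
      rw [Gm_eq, if_neg (Finset.mem_filter.1 hk).2]
  rw [hsplitp, hsplitm]
  constructor
  · rintro ⟨h1, h2, h3⟩
    refine ⟨h1, by linear_combination (h3 - h2) / 2, by linear_combination (h3 + h2) / 2⟩
  · rintro ⟨h1, h2, h3⟩
    exact ⟨h1, by rw [h2, h3]; ring, by rw [h2, h3]; ring⟩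

lemma eta_ne {m : ℕ} {η : ℂ} (hη : η^2 = 2*(m:ℂ)+1) : η ≠ 0 := by
  intro h
  rw [h] at hη
  have h2 : ((2*m+1:ℕ):ℂ) = 0 := by push_cast; rw [← hη]; ring
  have := Nat.cast_eq_zero.1 h2
  omega

lemma Gp_zero (η : ℂ) (n : ℕ) : Gp η n 0 = -(η * n) := by
  simp [Gp]

lemma Gp_zero_ne {η : ℂ} (hη : η ≠ 0) {n : ℕ} (hn : 1 ≤ n) : Gp η n 0 ≠ 0 := by
  rw [Gp_zero]
  simp only [ne_eq, neg_eq_zero, mul_eq_zero, not_or]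
  exact ⟨hη, Nat.cast_ne_zero.2 (by omega)⟩

lemma Gp_pivot (m n : ℕ) (η : ℂ) (hη : η^2 = 2*(m:ℂ)+1) :
    Gp η n (2*m+1) = η^(2*m) * (2*(m:ℂ)+1) * (1 - ((n - (2*m+1) : ℕ) : ℂ)) := by
  have h1 : 2*m+1-1 = 2*m := by omega
  rw [Gp, h1]
  push_cast
  linear_combination (-((n - (2*m+1):ℕ):ℂ) * η^(2*m)) * hη

lemma Gp_pivot_ne {m n : ℕ} {η : ℂ} (hη : η^2 = 2*(m:ℂ)+1) (h2 : n ≠ 2*m+2) :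
    Gp η n (2*m+1) ≠ 0 := by
  rw [Gp_pivot m n η hη]
  refine mul_ne_zero (mul_ne_zero (pow_ne_zero _ (eta_ne hη)) ?_) ?_
  · have : ((2*m+1:ℕ):ℂ) ≠ 0 := Nat.cast_ne_zero.2 (by omega)
    push_cast at this ⊢
    exact this
  · rw [sub_ne_zero]
    intro h
    have : ((1:ℕ):ℂ) = ((n - (2*m+1):ℕ):ℂ) := by rw [← h]; norm_num
    have := Nat.cast_injective (R := ℂ) this
    omega

lemma Gp_pivot_zero {m n : ℕ} {η : ℂ} (hη : η^2 = 2*(m:ℂ)+1) (h2 : n = 2*m+2) :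
    Gp η n (2*m+1) = 0 := by
  rw [Gp_pivot m n η hη, h2]
  have : (2*m+2) - (2*m+1) = 1 := by omega
  rw [this]
  norm_num

lemma coeff_sum_basis (n j : ℕ) (hj : j ≤ n) (a : ℕ → ℂ) :
    coeff (ee j (n-j)) (∑ k ∈ range (n+1), monomial (ee k (n-k)) (a k)) = a j := by
  rw [MvPolynomial.coeff_sum]
  simp only [coeff_monomial]
  rw [Finset.sum_eq_single j]
  · rw [if_pos rfl]
  · intro k hk hkj
    rw [if_neg]
    intro he
    exact hkj (ee_inj he).1
  · intro hj2
    exact absurd (Finset.mem_range.2 (by omega)) hj2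

lemma hom_expand {n : ℕ} {q : MvPolynomial (Fin 2) ℂ} (hq : q.IsHomogeneous n) :
    q = ∑ k ∈ range (n+1), monomial (ee k (n-k)) (coeff (ee k (n-k)) q) := by
  apply MvPolynomial.ext
  intro d
  rw [MvPolynomial.coeff_sum]
  simp only [coeff_monomial]
  by_cases hd : d.degree = n
  · have hde : d = ee (d 0) (d 1) := fin2_eq d
    have hdeg : d 0 + d 1 = n := by rw [hde, ee_degree] at hd; exact hd
    have h3 : n - d 0 = d 1 := by omega
    have hee : ee (d 0) (n - d 0) = d := by rw [h3]; exact (fin2_eq d).symm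
    rw [Finset.sum_eq_single (d 0)]
    · rw [if_pos hee, hee]
    · intro k hk hkd
      rw [if_neg]
      intro he
      rw [← hee] at he
      exact hkd (ee_inj he).1
    · intro h0
      exact absurd (Finset.mem_range.2 (by omega)) h0
  · rw [hq.coeff_eq_zero hd, Finset.sum_eq_zero]
    intro k hk
    rw [if_neg]
    intro he
    apply hd
    rw [← he, ee_degree]
    have := Finset.mem_range.1 hk
    omega

def piv (m n k : ℕ) : Prop :=
  (k % 2 = 1 ∧ k ≤ 2*m-1) ∨ (k = 0 ∧ 1 ≤ n) ∨ (k = 2*m+1 ∧ n ≠ 2*m+2)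

instance (m n k : ℕ) : Decidable (piv m n k) := by unfold piv; infer_instance

def FF (m n : ℕ) : Finset ℕ := (range (n+1)).filter (fun k => ¬ piv m n k)

def dd (m n : ℕ) : ℕ :=
  if n = 0 then 1 else if n ≤ 2*m+1 then n/2 else if n = 2*m+2 then m+2 else n - m - 1

lemma card_odd_filter (N : ℕ) : ((range N).filter (fun k => k % 2 = 1)).card = N / 2 := by
  induction N with
  | zero => simp
  | succ N ih =>
      rw [Finset.range_add_one, Finset.filter_insert]
      by_cases h : N % 2 = 1
      · rw [if_pos h, Finset.card_insert_of_notMem (by simp), ih]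
        omega
      · rw [if_neg h, ih]
        omega

lemma card_FF (m n : ℕ) (hm : 1 ≤ m) : (FF m n).card = dd m n := by
  have hsplit := Finset.card_filter_add_card_filter_not
    (s := range (n+1)) (p := fun k => piv m n k)
  have h1 : ((range (n+1)).filter (fun k => piv m n k)).card
      = min (2*m) (n+1) / 2 + (if 1 ≤ n then 1 else 0)
        + (if 2*m+1 ≤ n ∧ n ≠ 2*m+2 then 1 else 0) := by
    have e1 : (range (n+1)).filter (fun k => piv m n k)
        = ((range (n+1)).filter (fun k => k % 2 = 1 ∧ k ≤ 2*m-1))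
          ∪ ((range (n+1)).filter (fun k => k = 0 ∧ 1 ≤ n))
          ∪ ((range (n+1)).filter (fun k => k = 2*m+1 ∧ n ≠ 2*m+2)) := by
      ext k
      simp only [Finset.mem_filter, Finset.mem_union, Finset.mem_range]
      simp only [piv]
      tauto
    rw [e1, Finset.card_union_of_disjoint, Finset.card_union_of_disjoint]
    · congr 1
      · congr 1
        · have e2 : (range (n+1)).filter (fun k => k % 2 = 1 ∧ k ≤ 2*m-1)
              = (range (min (2*m) (n+1))).filter (fun k => k % 2 = 1) := by
            ext k
            simp only [Finset.mem_filter, Finset.mem_range]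
            omega
          rw [e2, card_odd_filter]
        · by_cases h : 1 ≤ n
          · rw [if_pos h]
            have : (range (n+1)).filter (fun k => k = 0 ∧ 1 ≤ n) = {0} := by
              ext k
              simp only [Finset.mem_filter, Finset.mem_range, Finset.mem_singleton]
              omega
            rw [this, Finset.card_singleton]
          · rw [if_neg h]
            have : (range (n+1)).filter (fun k => k = 0 ∧ 1 ≤ n) = ∅ := by
              ext k
              simp only [Finset.mem_filter, Finset.mem_range, Finset.notMem_empty, iff_false]
              omega
            rw [this, Finset.card_empty]
      · by_cases h : 2*m+1 ≤ n ∧ n ≠ 2*m+2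
        · rw [if_pos h]
          have : (range (n+1)).filter (fun k => k = 2*m+1 ∧ n ≠ 2*m+2) = {2*m+1} := by
            ext k
            simp only [Finset.mem_filter, Finset.mem_range, Finset.mem_singleton]
            omega
          rw [this, Finset.card_singleton]
        · rw [if_neg h]
          have : (range (n+1)).filter (fun k => k = 2*m+1 ∧ n ≠ 2*m+2) = ∅ := by
            ext k
            simp only [Finset.mem_filter, Finset.mem_range, Finset.notMem_empty, iff_false]
            omega
          rw [this, Finset.card_empty]
    · rw [Finset.disjoint_left]
      intro k hk hk2
      simp only [Finset.mem_union, Finset.mem_filter, Finset.mem_range] at hk hk2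
      omega
    · rw [Finset.disjoint_left]
      intro k hk hk2
      simp only [Finset.mem_union, Finset.mem_filter, Finset.mem_range] at hk hk2
      omega
  have hcard : (range (n+1)).card = n + 1 := Finset.card_range _
  rw [FF]
  rw [hcard] at hsplit
  rw [h1] at hsplit
  rw [dd]
  split_ifs at hsplit ⊢ <;> omega

lemma mem_FF (m n k : ℕ) : k ∈ FF m n ↔ k ≤ n ∧
    ¬((k % 2 = 1 ∧ k ≤ 2*m-1) ∨ (k = 0 ∧ 1 ≤ n) ∨ (k = 2*m+1 ∧ n ≠ 2*m+2)) := by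
  simp only [FF, Finset.mem_filter, Finset.mem_range]
  constructor <;> rintro ⟨h1, h2⟩ <;> exact ⟨by omega, h2⟩

theorem finrank_inter (m : ℕ) (hm : 1 ≤ m) (η : ℂ) (hη : η^2 = 2*(m:ℂ)+1) (n : ℕ) :
    Module.finrank ℂ ↥(homogeneousSubmodule (Fin 2) ℂ n ⊓ quasiA m η) = dd m n := by
  classical
  set V := homogeneousSubmodule (Fin 2) ℂ n ⊓ quasiA m η with hV
  set Φ : ↥V →ₗ[ℂ] ({ x // x ∈ FF m n } → ℂ) :=
    LinearMap.pi (fun k => (lcoeff ℂ (ee (k:ℕ) (n - (k:ℕ)))).comp V.subtype) with hΦ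
  have hΦapp : ∀ (q : ↥V) (k : { x // x ∈ FF m n }),
      Φ q k = coeff (ee (k:ℕ) (n - (k:ℕ))) (q : MvPolynomial (Fin 2) ℂ) := fun q k => rfl
  have hinj : Function.Injective Φ := by
    rw [injective_iff_map_eq_zero]
    intro q hq0
    obtain ⟨hhom, hquasi⟩ := Submodule.mem_inf.1 q.2
    rw [mem_homogeneousSubmodule] at hhom
    set a : ℕ → ℂ := fun k => coeff (ee k (n-k)) (q : MvPolynomial (Fin 2) ℂ) with haa
    have hexp : (q : MvPolynomial (Fin 2) ℂ)
        = ∑ k ∈ range (n+1), monomial (ee k (n-k)) (a k) := hom_expand hhom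
    rw [hexp] at hquasi
    obtain ⟨h1, hE, hO⟩ := (mem_quasiA_sum_iff m n η a).1 hquasi
    have haF : ∀ j, j ∈ FF m n → a j = 0 := by
      intro j hj
      have h2 := congrFun hq0 ⟨j, hj⟩
      rw [hΦapp] at h2
      exact h2
    have haOdd : ∀ j, j % 2 = 1 → j ≤ 2*m-1 → j ≤ n → a j = 0 := by
      intro j hj1 hj2 hj3
      have h2 := h1 ((j+1)/2) (Finset.mem_Icc.2 (by omega)) (by omega)
      rwa [(by omega : 2*((j+1)/2)-1 = j)] at h2
    have hall : ∀ k ∈ range (n+1), a k = 0 := by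
      intro k hk
      rw [Finset.mem_range] at hk
      by_cases hF : k ∈ FF m n
      · exact haF k hF
      · have hp : (k % 2 = 1 ∧ k ≤ 2*m-1) ∨ (k = 0 ∧ 1 ≤ n) ∨ (k = 2*m+1 ∧ n ≠ 2*m+2) := by
          by_contra hnp
          exact hF ((mem_FF m n k).2 ⟨by omega, hnp⟩)
        rcases hp with ⟨ho, hle⟩ | ⟨hk0, hn1⟩ | ⟨hk2, hn2⟩
        · exact haOdd k ho hle (by omega)
        · subst hk0
          have hEe : ∑ j ∈ (range (n+1)).filter (fun j => j % 2 = 0), a j * Gp η n j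
              = a 0 * Gp η n 0 := by
            refine Finset.sum_eq_single_of_mem 0
              (Finset.mem_filter.2 ⟨Finset.mem_range.2 (by omega), by norm_num⟩) ?_
            intro j hj hj0
            obtain ⟨hjr, hje⟩ := Finset.mem_filter.1 hj
            rw [Finset.mem_range] at hjr
            have hjF : j ∈ FF m n := (mem_FF m n j).2 ⟨by omega, by omega⟩
            rw [haF j hjF, zero_mul]
          rw [hEe] at hE
          exact (mul_eq_zero.1 hE).resolve_right (Gp_zero_ne (eta_ne hη) hn1)
        · subst hk2
          have hOe : ∑ j ∈ (range (n+1)).filter (fun j => ¬(j % 2 = 0)), a j * Gp η n j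
              = a (2*m+1) * Gp η n (2*m+1) := by
            refine Finset.sum_eq_single_of_mem (2*m+1)
              (Finset.mem_filter.2 ⟨Finset.mem_range.2 (by omega), by omega⟩) ?_
            intro j hj hj0
            obtain ⟨hjr, hje⟩ := Finset.mem_filter.1 hj
            rw [Finset.mem_range] at hjr
            by_cases hj2 : j ≤ 2*m-1
            · rw [haOdd j (by omega) hj2 (by omega), zero_mul]
            · have hjF : j ∈ FF m n := (mem_FF m n j).2 ⟨by omega, by omega⟩
              rw [haF j hjF, zero_mul]
          rw [hOe] at hO
          exact (mul_eq_zero.1 hO).resolve_right (Gp_pivot_ne hη hn2)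
    apply Subtype.ext
    show (q : MvPolynomial (Fin 2) ℂ) = 0
    rw [hexp]
    exact Finset.sum_eq_zero fun k hk => by rw [hall k hk, map_zero]
  have hsurj : Function.Surjective Φ := by
    intro v
    set b : ℕ → ℂ := fun k => if h : k ∈ FF m n then v ⟨k, h⟩ else 0 with hb
    set S0 := ∑ j ∈ (range (n+1)).filter (fun j => j % 2 = 0 ∧ j ≠ 0), b j * Gp η n j with hS0
    set T0 := ∑ j ∈ (range (n+1)).filter (fun j => ¬(j % 2 = 0)), b j * Gp η n j with hT0
    set a : ℕ → ℂ := fun k =>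
      if k = 0 ∧ 1 ≤ n then -S0 / Gp η n 0
      else if k = 2*m+1 ∧ n ≠ 2*m+2 then -T0 / Gp η n (2*m+1)
      else b k with ha
    have haeval : ∀ k, a k = if k = 0 ∧ 1 ≤ n then -S0 / Gp η n 0
      else if k = 2*m+1 ∧ n ≠ 2*m+2 then -T0 / Gp η n (2*m+1)
      else b k := fun k => rfl
    set q := ∑ k ∈ range (n+1), monomial (ee k (n-k)) (a k) with hq
    have hhom : q ∈ homogeneousSubmodule (Fin 2) ℂ n := by
      refine Submodule.sum_mem _ fun k hk => ?_
      rw [Finset.mem_range] at hk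
      exact (mem_homogeneousSubmodule _ _).2 (isHomogeneous_monomial _ (by rw [ee_degree]; omega))
    have hquasi : q ∈ quasiA m η := by
      refine (mem_quasiA_sum_iff m n η a).2 ⟨?_, ?_, ?_⟩
      · intro r hr hle
        rw [Finset.mem_Icc] at hr
        rw [haeval, if_neg (by omega), if_neg (by omega)]
        exact dif_neg (by rw [mem_FF]; rintro ⟨-, hnp⟩; exact hnp (Or.inl ⟨by omega, by omega⟩))
      · have hsplit0 : (range (n+1)).filter (fun k => k % 2 = 0)
            = insert 0 ((range (n+1)).filter (fun j => j % 2 = 0 ∧ j ≠ 0)) := by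
          ext j
          simp only [Finset.mem_filter, Finset.mem_range, Finset.mem_insert]
          omega
        rw [hsplit0, Finset.sum_insert (by simp)]
        have hrest : ∑ j ∈ (range (n+1)).filter (fun j => j % 2 = 0 ∧ j ≠ 0), a j * Gp η n j
            = S0 := by
          refine Finset.sum_congr rfl fun j hj => ?_
          obtain ⟨hjr, hje, hj0⟩ := Finset.mem_filter.1 hj
          rw [haeval, if_neg (by omega), if_neg (by omega)]
        rw [hrest]
        by_cases hn : 1 ≤ n
        · rw [haeval, if_pos ⟨rfl, hn⟩, div_mul_cancel₀ _ (Gp_zero_ne (eta_ne hη) hn)]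
          ring
        · have hn0 : n = 0 := by omega
          have hgp : Gp η n 0 = 0 := by rw [hn0, Gp_zero]; norm_num
          have hs0 : S0 = 0 := by
            rw [hS0]
            refine Finset.sum_eq_zero fun j hj => ?_
            obtain ⟨hjr, -, hj0⟩ := Finset.mem_filter.1 hj
            rw [Finset.mem_range] at hjr
            omega
          rw [hgp, hs0, mul_zero, add_zero]
      · by_cases hc : 2*m+1 ≤ n ∧ n ≠ 2*m+2
        · have hmem : 2*m+1 ∈ (range (n+1)).filter (fun j => ¬(j % 2 = 0)) :=
            Finset.mem_filter.2 ⟨Finset.mem_range.2 (by omega), by omega⟩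
          rw [← Finset.add_sum_erase _ _ hmem]
          have h2 : a (2*m+1) = -T0 / Gp η n (2*m+1) := by
            rw [haeval, if_neg (by omega), if_pos ⟨rfl, hc.2⟩]
          have hb0 : b (2*m+1) = 0 :=
            dif_neg (by rw [mem_FF]; rintro ⟨-, hnp⟩; exact hnp (Or.inr (Or.inr ⟨rfl, hc.2⟩)))
          have h3 : ∑ j ∈ ((range (n+1)).filter (fun j => ¬(j % 2 = 0))).erase (2*m+1),
              a j * Gp η n j = T0 := by
            rw [hT0, ← Finset.add_sum_erase _ (fun j => b j * Gp η n j) hmem, hb0, zero_mul,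
              zero_add]
            refine Finset.sum_congr rfl fun j hj => ?_
            have hjne := Finset.ne_of_mem_erase hj
            obtain ⟨hjr, hje⟩ := Finset.mem_filter.1 (Finset.mem_of_mem_erase hj)
            rw [haeval, if_neg (by omega), if_neg (by omega)]
          rw [h2, h3, div_mul_cancel₀ _ (Gp_pivot_ne hη hc.2)]
          ring
        · push_neg at hc
          refine Finset.sum_eq_zero fun j hj => ?_
          obtain ⟨hjr, hje⟩ := Finset.mem_filter.1 hj
          rw [Finset.mem_range] at hjr
          by_cases hj2 : j ≤ 2*m-1
          · have haj : a j = b j := by rw [haeval, if_neg (by omega), if_neg (by omega)]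
            have hbj : b j = 0 :=
              dif_neg (by rw [mem_FF]; rintro ⟨-, hnp⟩; exact hnp (Or.inl ⟨by omega, by omega⟩))
            rw [haj, hbj, zero_mul]
          · have hn2 : n = 2*m+2 := by omega
            have hj3 : j = 2*m+1 := by omega
            rw [hj3, Gp_pivot_zero hη hn2, mul_zero]
    refine ⟨⟨q, Submodule.mem_inf.2 ⟨hhom, hquasi⟩⟩, ?_⟩
    funext k
    rw [hΦapp]
    show coeff (ee (k:ℕ) (n - (k:ℕ))) q = v k
    have hkF := k.2
    have hkn : (k:ℕ) ≤ n := ((mem_FF m n k).1 hkF).1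
    have hnp := ((mem_FF m n k).1 hkF).2
    rw [hq, coeff_sum_basis n (k:ℕ) hkn]
    rw [haeval, if_neg (fun h => hnp (Or.inr (Or.inl h))),
      if_neg (fun h => hnp (Or.inr (Or.inr h)))]
    rw [hb]
    simp only [dif_pos hkF]
  have e := LinearEquiv.ofBijective Φ ⟨hinj, hsurj⟩
  rw [e.finrank_eq, Module.finrank_fintype_fun_eq_card, Fintype.card_coe, card_FF m n hm]

lemma dd_zero (m : ℕ) : dd m 0 = 1 := by simp [dd]

lemma dd_small (m k : ℕ) (h1 : k ≠ 0) (h2 : k ≤ 2*m+1) : dd m k = k/2 := by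
  rw [dd, if_neg h1, if_pos h2]

lemma dd_mid (m k : ℕ) (h : k = 2*m+2) : dd m k = m+2 := by
  rw [dd, if_neg (by omega), if_neg (by omega), if_pos h]

lemma dd_big (m k : ℕ) (h : 2*m+3 ≤ k) : dd m k = k - m - 1 := by
  rw [dd, if_neg (by omega), if_neg (by omega), if_neg (by omega)]

lemma coeff_identity (m : ℕ) (hm : 1 ≤ m) (N : ℕ) :
    (dd m N : ℚ) - (if 2 ≤ N then (dd m (N-2) : ℚ) else 0)
      - (if 3 ≤ N then (dd m (N-3) : ℚ) else 0)
      + (if 5 ≤ N then (dd m (N-5) : ℚ) else 0)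
    = (if N = 0 then 1 else 0) + (if N = 4 then 1 else 0) + (if N = 5 then 1 else 0)
      + (if N = 2*m+2 then 1 else 0) + (if N = 2*m+3 then 1 else 0)
      + (if N = 2*m+7 then 1 else 0) := by
  have hcase : N = 0 ∨ N = 1 ∨ N = 2 ∨ N = 3 ∨ (N = 4 ∧ m = 1) ∨ (N = 4 ∧ 2 ≤ m)
      ∨ (N = 5 ∧ m = 1) ∨ (N = 5 ∧ 2 ≤ m) ∨ (6 ≤ N ∧ N ≤ 2*m+1) ∨ (6 ≤ N ∧ N = 2*m+2)
      ∨ (6 ≤ N ∧ N = 2*m+3) ∨ N = 2*m+4 ∨ N = 2*m+5 ∨ N = 2*m+6 ∨ N = 2*m+7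
      ∨ 2*m+8 ≤ N := by omega
  rcases hcase with h|h|h|h|⟨h,h'⟩|⟨h,h'⟩|⟨h,h'⟩|⟨h,h'⟩|⟨h,h'⟩|⟨h,h'⟩|⟨h,h'⟩|h|h|h|h|h
  · subst h
    rw [if_neg (by omega), if_neg (by omega), if_neg (by omega), if_pos rfl,
      if_neg (by omega), if_neg (by omega), if_neg (by omega), if_neg (by omega),
      if_neg (by omega), dd_zero]
    norm_num
  · subst h
    rw [if_neg (by omega), if_neg (by omega), if_neg (by omega), if_neg (by omega),
      if_neg (by omega), if_neg (by omega), if_neg (by omega), if_neg (by omega),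
      if_neg (by omega), dd_small m 1 (by omega) (by omega)]
    norm_num
  · subst h
    rw [if_pos (by omega : 2 ≤ 2), if_neg (by omega), if_neg (by omega), if_neg (by omega),
      if_neg (by omega), if_neg (by omega), if_neg (by omega), if_neg (by omega),
      if_neg (by omega), dd_small m 2 (by omega) (by omega)]
    have e0 : (2:ℕ) - 2 = 0 := by omega
    rw [e0, dd_zero]
    norm_num
  · subst h
    rw [if_pos (by omega : 2 ≤ 3), if_pos (by omega : 3 ≤ 3), if_neg (by omega),
      if_neg (by omega), if_neg (by omega), if_neg (by omega), if_neg (by omega),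
      if_neg (by omega), if_neg (by omega), dd_small m 3 (by omega) (by omega)]
    have e0 : (3:ℕ) - 3 = 0 := by omega
    have e1 : (3:ℕ) - 2 = 1 := by omega
    rw [e0, e1, dd_zero, dd_small m 1 (by omega) (by omega)]
    norm_num
  · -- N = 4, m = 1
    subst h; subst h'
    norm_num [dd]
  · -- N = 4, m ≥ 2
    subst h
    rw [if_pos (by omega : 2 ≤ 4), if_pos (by omega : 3 ≤ 4), if_neg (by omega),
      if_neg (by omega), if_pos rfl, if_neg (by omega), if_neg (by omega),
      if_neg (by omega), if_neg (by omega), dd_small m 4 (by omega) (by omega)]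
    have e0 : (4:ℕ) - 2 = 2 := by omega
    have e1 : (4:ℕ) - 3 = 1 := by omega
    rw [e0, e1, dd_small m 2 (by omega) (by omega), dd_small m 1 (by omega) (by omega)]
    norm_num
  · -- N = 5, m = 1
    subst h; subst h'
    norm_num [dd]
  · -- N = 5, m ≥ 2
    subst h
    rw [if_pos (by omega : 2 ≤ 5), if_pos (by omega : 3 ≤ 5), if_pos (by omega : 5 ≤ 5),
      if_neg (by omega), if_neg (by omega), if_pos rfl, if_neg (by omega),
      if_neg (by omega), if_neg (by omega), dd_small m 5 (by omega) (by omega)]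
    have e0 : (5:ℕ) - 2 = 3 := by omega
    have e1 : (5:ℕ) - 3 = 2 := by omega
    have e2 : (5:ℕ) - 5 = 0 := by omega
    rw [e0, e1, e2, dd_small m 3 (by omega) (by omega), dd_small m 2 (by omega) (by omega),
      dd_zero]
    norm_num
  · -- 6 ≤ N ≤ 2m+1
    rw [if_pos (by omega : 2 ≤ N), if_pos (by omega : 3 ≤ N), if_pos (by omega : 5 ≤ N),
      if_neg (by omega), if_neg (by omega), if_neg (by omega), if_neg (by omega),
      if_neg (by omega), if_neg (by omega), dd_small m N (by omega) (by omega),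
      dd_small m (N-2) (by omega) (by omega), dd_small m (N-3) (by omega) (by omega),
      dd_small m (N-5) (by omega) (by omega)]
    have e1 : (((N-2)/2 : ℕ) : ℚ) + 1 = ((N/2 : ℕ) : ℚ) := by exact_mod_cast
      (by omega : ((N-2)/2 : ℕ) + 1 = N/2)
    have e2 : (((N-5)/2 : ℕ) : ℚ) + 1 = (((N-3)/2 : ℕ) : ℚ) := by exact_mod_cast
      (by omega : ((N-5)/2 : ℕ) + 1 = (N-3)/2)
    linarith
  · -- N = 2m+2, N ≥ 6 (so m ≥ 2)
    rw [if_pos (by omega : 2 ≤ N), if_pos (by omega : 3 ≤ N), if_pos (by omega : 5 ≤ N),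
      if_neg (by omega), if_neg (by omega), if_neg (by omega), if_pos h',
      if_neg (by omega), if_neg (by omega), dd_mid m N h',
      dd_small m (N-2) (by omega) (by omega), dd_small m (N-3) (by omega) (by omega),
      dd_small m (N-5) (by omega) (by omega)]
    have e1 : (((N-2)/2 : ℕ) : ℚ) = (m : ℚ) := by exact_mod_cast
      (by omega : ((N-2)/2 : ℕ) = m)
    have e2 : (((N-3)/2 : ℕ) : ℚ) + 1 = (m : ℚ) := by exact_mod_cast
      (by omega : ((N-3)/2 : ℕ) + 1 = m)
    have e3 : (((N-5)/2 : ℕ) : ℚ) + 2 = (m : ℚ) := by exact_mod_cast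
      (by omega : ((N-5)/2 : ℕ) + 2 = m)
    push_cast
    linarith
  · -- N = 2m+3, N ≥ 6 (so m ≥ 2)
    rw [if_pos (by omega : 2 ≤ N), if_pos (by omega : 3 ≤ N), if_pos (by omega : 5 ≤ N),
      if_neg (by omega), if_neg (by omega), if_neg (by omega), if_neg (by omega),
      if_pos h', if_neg (by omega), dd_big m N (by omega),
      dd_small m (N-2) (by omega) (by omega), dd_small m (N-3) (by omega) (by omega),
      dd_small m (N-5) (by omega) (by omega)]
    have e0 : ((N-m-1 : ℕ) : ℚ) = (m : ℚ) + 2 := by exact_mod_cast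
      (by omega : (N-m-1 : ℕ) = m + 2)
    have e1 : (((N-2)/2 : ℕ) : ℚ) = (m : ℚ) := by exact_mod_cast
      (by omega : ((N-2)/2 : ℕ) = m)
    have e2 : (((N-3)/2 : ℕ) : ℚ) = (m : ℚ) := by exact_mod_cast
      (by omega : ((N-3)/2 : ℕ) = m)
    have e3 : (((N-5)/2 : ℕ) : ℚ) + 1 = (m : ℚ) := by exact_mod_cast
      (by omega : ((N-5)/2 : ℕ) + 1 = m)
    linarith
  · -- N = 2m+4
    rw [if_pos (by omega : 2 ≤ N), if_pos (by omega : 3 ≤ N), if_pos (by omega : 5 ≤ N),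
      if_neg (by omega), if_neg (by omega), if_neg (by omega), if_neg (by omega),
      if_neg (by omega), if_neg (by omega), dd_big m N (by omega),
      dd_mid m (N-2) (by omega), dd_small m (N-3) (by omega) (by omega),
      dd_small m (N-5) (by omega) (by omega)]
    have e0 : ((N-m-1 : ℕ) : ℚ) = (m : ℚ) + 3 := by exact_mod_cast
      (by omega : (N-m-1 : ℕ) = m + 3)
    have e2 : (((N-3)/2 : ℕ) : ℚ) = (m : ℚ) := by exact_mod_cast
      (by omega : ((N-3)/2 : ℕ) = m)
    have e3 : (((N-5)/2 : ℕ) : ℚ) + 1 = (m : ℚ) := by exact_mod_cast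
      (by omega : ((N-5)/2 : ℕ) + 1 = m)
    push_cast
    linarith
  · -- N = 2m+5
    rw [if_pos (by omega : 2 ≤ N), if_pos (by omega : 3 ≤ N), if_pos (by omega : 5 ≤ N),
      if_neg (by omega), if_neg (by omega), if_neg (by omega), if_neg (by omega),
      if_neg (by omega), if_neg (by omega), dd_big m N (by omega),
      dd_big m (N-2) (by omega), dd_mid m (N-3) (by omega),
      dd_small m (N-5) (by omega) (by omega)]
    have e0 : ((N-m-1 : ℕ) : ℚ) = (m : ℚ) + 4 := by exact_mod_cast
      (by omega : (N-m-1 : ℕ) = m + 4)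
    have e1 : ((N-2-m-1 : ℕ) : ℚ) = (m : ℚ) + 2 := by exact_mod_cast
      (by omega : (N-2-m-1 : ℕ) = m + 2)
    have e3 : (((N-5)/2 : ℕ) : ℚ) = (m : ℚ) := by exact_mod_cast
      (by omega : ((N-5)/2 : ℕ) = m)
    push_cast
    linarith
  · -- N = 2m+6
    rw [if_pos (by omega : 2 ≤ N), if_pos (by omega : 3 ≤ N), if_pos (by omega : 5 ≤ N),
      if_neg (by omega), if_neg (by omega), if_neg (by omega), if_neg (by omega),
      if_neg (by omega), if_neg (by omega), dd_big m N (by omega),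
      dd_big m (N-2) (by omega), dd_big m (N-3) (by omega),
      dd_small m (N-5) (by omega) (by omega)]
    have e0 : ((N-m-1 : ℕ) : ℚ) = (m : ℚ) + 5 := by exact_mod_cast
      (by omega : (N-m-1 : ℕ) = m + 5)
    have e1 : ((N-2-m-1 : ℕ) : ℚ) = (m : ℚ) + 3 := by exact_mod_cast
      (by omega : (N-2-m-1 : ℕ) = m + 3)
    have e2 : ((N-3-m-1 : ℕ) : ℚ) = (m : ℚ) + 2 := by exact_mod_cast
      (by omega : (N-3-m-1 : ℕ) = m + 2)
    have e3 : (((N-5)/2 : ℕ) : ℚ) = (m : ℚ) := by exact_mod_cast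
      (by omega : ((N-5)/2 : ℕ) = m)
    linarith
  · -- N = 2m+7
    rw [if_pos (by omega : 2 ≤ N), if_pos (by omega : 3 ≤ N), if_pos (by omega : 5 ≤ N),
      if_neg (by omega), if_neg (by omega), if_neg (by omega), if_neg (by omega),
      if_neg (by omega), if_pos h, dd_big m N (by omega),
      dd_big m (N-2) (by omega), dd_big m (N-3) (by omega), dd_mid m (N-5) (by omega)]
    have e0 : ((N-m-1 : ℕ) : ℚ) = (m : ℚ) + 6 := by exact_mod_cast
      (by omega : (N-m-1 : ℕ) = m + 6)
    have e1 : ((N-2-m-1 : ℕ) : ℚ) = (m : ℚ) + 4 := by exact_mod_cast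
      (by omega : (N-2-m-1 : ℕ) = m + 4)
    have e2 : ((N-3-m-1 : ℕ) : ℚ) = (m : ℚ) + 3 := by exact_mod_cast
      (by omega : (N-3-m-1 : ℕ) = m + 3)
    push_cast
    linarith
  · -- N ≥ 2m+8
    rw [if_pos (by omega : 2 ≤ N), if_pos (by omega : 3 ≤ N), if_pos (by omega : 5 ≤ N),
      if_neg (by omega), if_neg (by omega), if_neg (by omega), if_neg (by omega),
      if_neg (by omega), if_neg (by omega), dd_big m N (by omega),
      dd_big m (N-2) (by omega), dd_big m (N-3) (by omega), dd_big m (N-5) (by omega)]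
    have e1 : ((N-2-m-1 : ℕ) : ℚ) + 2 = ((N-m-1 : ℕ) : ℚ) := by exact_mod_cast
      (by omega : (N-2-m-1 : ℕ) + 2 = N-m-1)
    have e2 : ((N-3-m-1 : ℕ) : ℚ) + 3 = ((N-m-1 : ℕ) : ℚ) := by exact_mod_cast
      (by omega : (N-3-m-1 : ℕ) + 3 = N-m-1)
    have e3 : ((N-5-m-1 : ℕ) : ℚ) + 5 = ((N-m-1 : ℕ) : ℚ) := by exact_mod_cast
      (by omega : (N-5-m-1 : ℕ) + 5 = N-m-1)
    linarith

end QA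

end QAproof

/-- The Poincaré series of the ring of quasi-invariants of `A₂(m)` equals
`(1 + t⁴ + t⁵ + t^{2m+2} + t^{2m+3} + t^{2m+7}) / ((1-t²)(1-t³))`. -/
theorem quasiA_poincare_series (m : ℕ) (hm : 1 ≤ m) (η : ℂ) (hη : η ^ 2 = 2 * (m : ℂ) + 1) :
    (PowerSeries.mk fun n =>
        (Module.finrank ℂ
          ↥(MvPolynomial.homogeneousSubmodule (Fin 2) ℂ n ⊓ quasiA m η) : ℚ)) *
      (1 - PowerSeries.X ^ 2) * (1 - PowerSeries.X ^ 3) =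
    1 + PowerSeries.X ^ 4 + PowerSeries.X ^ 5 + PowerSeries.X ^ (2 * m + 2) +
      PowerSeries.X ^ (2 * m + 3) + PowerSeries.X ^ (2 * m + 7) := by
  have hmk : (PowerSeries.mk fun n =>
        (Module.finrank ℂ
          ↥(MvPolynomial.homogeneousSubmodule (Fin 2) ℂ n ⊓ quasiA m η) : ℚ))
      = PowerSeries.mk fun n => ((QA.dd m n : ℕ) : ℚ) := by
    refine congrArg PowerSeries.mk (funext fun n => ?_)
    rw [QA.finrank_inter m hm η hη n]
  rw [hmk]
  have expand : (PowerSeries.mk fun n => ((QA.dd m n : ℕ) : ℚ))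
        * (1 - PowerSeries.X ^ 2) * (1 - PowerSeries.X ^ 3)
      = (PowerSeries.mk fun n => ((QA.dd m n : ℕ) : ℚ))
        - (PowerSeries.mk fun n => ((QA.dd m n : ℕ) : ℚ)) * PowerSeries.X ^ 2
        - (PowerSeries.mk fun n => ((QA.dd m n : ℕ) : ℚ)) * PowerSeries.X ^ 3
        + (PowerSeries.mk fun n => ((QA.dd m n : ℕ) : ℚ)) * PowerSeries.X ^ 5 := by
    ring
  rw [expand]
  ext N
  simp only [map_add, map_sub, PowerSeries.coeff_mk, PowerSeries.coeff_mul_X_pow',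
    PowerSeries.coeff_one, PowerSeries.coeff_X_pow]
  exact QA.coeff_identity m hm N
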